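/- Let N be a finite set of positive integers with 1 ∈ N, closed under least common multiples, and let a : ℕ≥1 → ℝ be a sequence subordinated to N such that for every positive integer κ the number (1/κ) · Σ_{d | κ} φ(κ/d) · a(d) is an integer. Then there exist integers (c_q)_{q ∈ N} such that a(κ) = Σ_{q ∈ N, q | κ} c_q · q for every positive integer κ; that is, a is an integral linear combination of the sequences q·δ(q), q ∈ N. -/

import Mathlib

/-- A sequence `a` is subordinated to `N` if for every positive integer `κ`,
`a κ = a (q_N κ)` where `q_N κ` is the largest element of `N` dividing `κ`. -/
def Subordinated (N : Finset ℕ) (a : ℕ → ℝ) : Prop :=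
  ∀ κ, 0 < κ → ∀ q ∈ N, q ∣ κ → (∀ q' ∈ N, q' ∣ κ → q' ≤ q) → a κ = a q

noncomputable def T (N : Finset ℕ) (a : ℕ → ℝ) (q : ℕ) : ℝ :=
  a q - ∑ p ∈ (N.filter (fun p => p ∣ q ∧ p < q)).attach, T N a p.1
termination_by q
decreasing_by exact (Finset.mem_filter.mp p.2).2.2

lemma T_def (N : Finset ℕ) (a : ℕ → ℝ) (q : ℕ) :
    T N a q = a q - ∑ p ∈ N.filter (fun p => p ∣ q ∧ p < q), T N a p := by
  rw [T, Finset.sum_attach]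

lemma filter_insert (N : Finset ℕ) (q : ℕ) (hq : 0 < q) (hqN : q ∈ N) :
    N.filter (fun p => p ∣ q) = insert q (N.filter (fun p => p ∣ q ∧ p < q)) := by
  ext p
  simp only [Finset.mem_filter, Finset.mem_insert]
  constructor
  · rintro ⟨hpN, hpd⟩
    rcases eq_or_lt_of_le (Nat.le_of_dvd hq hpd) with h | h
    · exact Or.inl h
    · exact Or.inr ⟨hpN, hpd, h⟩
  · rintro (rfl | ⟨h1, h2, h3⟩)
    · exact ⟨hqN, dvd_refl _⟩
    · exact ⟨h1, h2⟩

lemma a_eq_sum_mem (N : Finset ℕ) (a : ℕ → ℝ) (q : ℕ) (hq : 0 < q) (hqN : q ∈ N) :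
    a q = ∑ p ∈ N.filter (fun p => p ∣ q), T N a p := by
  rw [filter_insert N q hq hqN, Finset.sum_insert (by simp), T_def]
  ring

lemma max_div (N : Finset ℕ) (h1 : 1 ∈ N)
    (hlcm : ∀ q ∈ N, ∀ q' ∈ N, Nat.lcm q q' ∈ N) (κ : ℕ) (hκ : 0 < κ) :
    ∃ M ∈ N, M ∣ κ ∧ (∀ q ∈ N, q ∣ κ → q ∣ M) ∧ (∀ q ∈ N, q ∣ κ → q ≤ M) := by
  have hne : (N.filter (fun p => p ∣ κ)).Nonempty :=
    ⟨1, Finset.mem_filter.mpr ⟨h1, one_dvd _⟩⟩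
  set M := (N.filter (fun p => p ∣ κ)).max' hne with hM
  have hMmem := (N.filter (fun p => p ∣ κ)).max'_mem hne
  rw [Finset.mem_filter] at hMmem
  obtain ⟨hMN, hMκ⟩ := hMmem
  have hle : ∀ q ∈ N, q ∣ κ → q ≤ M := fun q hqN hqκ =>
    Finset.le_max' (N.filter (fun p => p ∣ κ)) q (Finset.mem_filter.mpr ⟨hqN, hqκ⟩)
  refine ⟨M, hMN, hMκ, fun q hqN hqκ => ?_, hle⟩
  have hL : Nat.lcm q M ∈ N := hlcm q hqN M hMN
  have hLκ : Nat.lcm q M ∣ κ := Nat.lcm_dvd hqκ hMκ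
  have h2 : Nat.lcm q M ≤ M := hle _ hL hLκ
  have h3 : M ≤ Nat.lcm q M := Nat.le_of_dvd (Nat.pos_of_dvd_of_pos hLκ hκ) (Nat.dvd_lcm_right _ _)
  have : Nat.lcm q M = M := le_antisymm h2 h3
  exact this ▸ Nat.dvd_lcm_left q M

lemma a_eq_sum (N : Finset ℕ) (h1 : 1 ∈ N)
    (hlcm : ∀ q ∈ N, ∀ q' ∈ N, Nat.lcm q q' ∈ N)
    (a : ℕ → ℝ) (ha : Subordinated N a) (hpos : ∀ q ∈ N, 0 < q) (κ : ℕ) (hκ : 0 < κ) :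
    a κ = ∑ p ∈ N.filter (fun p => p ∣ κ), T N a p := by
  obtain ⟨M, hMN, hMκ, hdvd, hle⟩ := max_div N h1 hlcm κ hκ
  have hMpos : 0 < M := hpos M hMN
  have hfe : N.filter (fun p => p ∣ κ) = N.filter (fun p => p ∣ M) := by
    ext p
    simp only [Finset.mem_filter]
    exact ⟨fun ⟨h1, h2⟩ => ⟨h1, hdvd p h1 h2⟩, fun ⟨h1, h2⟩ => ⟨h1, h2.trans hMκ⟩⟩
  rw [ha κ hκ M hMN hMκ hle, hfe, a_eq_sum_mem N a M hMpos hMN]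

lemma totient_filter_sum (q p : ℕ) (hq : 0 < q) (hp : p ∣ q) :
    ∑ d ∈ q.divisors.filter (fun d => p ∣ d), Nat.totient (q / d) = q / p := by
  have hppos : 0 < p := Nat.pos_of_dvd_of_pos hp hq
  have hm : 0 < q / p := Nat.div_pos (Nat.le_of_dvd hq hp) hppos
  have : ∑ d ∈ q.divisors.filter (fun d => p ∣ d), Nat.totient (q / d)
      = ∑ e ∈ (q / p).divisors, Nat.totient ((q / p) / e) := by
    refine Finset.sum_nbij' (fun d => d / p) (fun e => p * e) ?_ ?_ ?_ ?_ ?_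
    · intro d hd
      simp only [Finset.mem_filter, Nat.mem_divisors] at hd
      obtain ⟨⟨hdq, hq0⟩, hpd⟩ := hd
      rw [Nat.mem_divisors]
      refine ⟨?_, by omega⟩
      obtain ⟨e, rfl⟩ := hpd
      simp only [Nat.mul_div_cancel_left _ hppos]
      exact (Nat.dvd_div_iff_mul_dvd hp).mpr hdq
    · intro e he
      rw [Nat.mem_divisors] at he
      simp only [Finset.mem_filter, Nat.mem_divisors]
      exact ⟨⟨(Nat.dvd_div_iff_mul_dvd hp).mp he.1, by omega⟩, Dvd.intro e rfl⟩
    · intro d hd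
      simp only [Finset.mem_filter, Nat.mem_divisors] at hd
      exact Nat.mul_div_cancel' hd.2
    · intro e he
      exact Nat.mul_div_cancel_left _ hppos
    · intro d hd
      simp only [Finset.mem_filter, Nat.mem_divisors] at hd
      obtain ⟨⟨hdq, hq0⟩, e, rfl⟩ := hd
      simp only [Nat.mul_div_cancel_left _ hppos, Nat.div_div_eq_div_mul]
  rw [this, Nat.sum_div_divisors, Nat.sum_totient]

lemma sumC (N : Finset ℕ) (h1 : 1 ∈ N)
    (hlcm : ∀ q ∈ N, ∀ q' ∈ N, Nat.lcm q q' ∈ N)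
    (a : ℕ → ℝ) (ha : Subordinated N a) (hpos : ∀ q ∈ N, 0 < q) (q : ℕ) (hq : 0 < q) :
    ∑ d ∈ q.divisors, (Nat.totient (q / d) : ℝ) * a d
      = ∑ p ∈ N.filter (fun p => p ∣ q), T N a p * ((q / p : ℕ) : ℝ) := by
  classical
  calc ∑ d ∈ q.divisors, (Nat.totient (q / d) : ℝ) * a d
      = ∑ d ∈ q.divisors, ∑ p ∈ N.filter (fun p => p ∣ d),
          (Nat.totient (q / d) : ℝ) * T N a p := by
        refine Finset.sum_congr rfl fun d hd => ?_
        rw [a_eq_sum N h1 hlcm a ha hpos d (Nat.pos_of_mem_divisors hd), Finset.mul_sum]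
    _ = ∑ p ∈ N, ∑ d ∈ q.divisors.filter (fun d => p ∣ d),
          (Nat.totient (q / d) : ℝ) * T N a p := by
        simp only [Finset.sum_filter]
        rw [Finset.sum_comm]
    _ = ∑ p ∈ N.filter (fun p => p ∣ q), T N a p * ((q / p : ℕ) : ℝ) := by
        rw [← Finset.sum_filter_add_sum_filter_not N (fun p => p ∣ q)]
        have hz : ∑ p ∈ N.filter (fun p => ¬ p ∣ q),
            ∑ d ∈ q.divisors.filter (fun d => p ∣ d),
              (Nat.totient (q / d) : ℝ) * T N a p = 0 := by
          refine Finset.sum_eq_zero fun p hp => ?_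
          rw [Finset.mem_filter] at hp
          have : q.divisors.filter (fun d => p ∣ d) = ∅ := by
            refine Finset.filter_eq_empty_iff.mpr fun d hd hpd => ?_
            exact hp.2 (hpd.trans (Nat.dvd_of_mem_divisors hd))
          simp [this]
        rw [hz, add_zero]
        refine Finset.sum_congr rfl fun p hp => ?_
        rw [Finset.mem_filter] at hp
        rw [← Finset.sum_mul, ← Nat.cast_sum, totient_filter_sum q p hq hp.2, mul_comm]

open Classical in
noncomputable def c0 (N : Finset ℕ) (a : ℕ → ℝ) (p : ℕ) : ℤ :=
  if h : ∃ z : ℤ, T N a p = (z : ℝ) * p then h.choose else 0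

lemma c0_spec (N : Finset ℕ) (a : ℕ → ℝ) (p : ℕ) (h : ∃ z : ℤ, T N a p = (z : ℝ) * p) :
    T N a p = ((c0 N a p : ℤ) : ℝ) * p := by
  rw [c0, dif_pos h]
  exact h.choose_spec

theorem stmt_10 (N : Finset ℕ) (hpos : ∀ q ∈ N, 0 < q) (h1 : 1 ∈ N)
    (hlcm : ∀ q ∈ N, ∀ q' ∈ N, Nat.lcm q q' ∈ N)
    (a : ℕ → ℝ) (ha : Subordinated N a)
    (hint : ∀ κ : ℕ, 0 < κ → ∃ z : ℤ,
      (1 / (κ : ℝ)) * ∑ d ∈ κ.divisors, (Nat.totient (κ / d) : ℝ) * a d = (z : ℝ)) :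
    ∃ c : ℕ → ℤ, ∀ κ, 0 < κ →
      a κ = ∑ q ∈ N.filter (fun q => q ∣ κ), (c q : ℝ) * (q : ℝ) := by
  classical
  have key : ∀ q, q ∈ N → ∃ z : ℤ, T N a q = (z : ℝ) * q := by
    intro q
    induction q using Nat.strong_induction_on with
    | _ q ih =>
      intro hqN
      have hq : 0 < q := hpos q hqN
      have hq0 : (q : ℝ) ≠ 0 := Nat.cast_ne_zero.mpr hq.ne'
      obtain ⟨z, hz⟩ := hint q hq
      rw [sumC N h1 hlcm a ha hpos q hq] at hz
      have hsplit : N.filter (fun p => p ∣ q) = insert q (N.filter (fun p => p ∣ q ∧ p < q)) :=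
        filter_insert N q hq hqN
      have hqnotin : q ∉ N.filter (fun p => p ∣ q ∧ p < q) := by simp
      -- rewrite hz as a sum of T p / p
      have hz2 : ∑ p ∈ N.filter (fun p => p ∣ q), T N a p / p = (z : ℝ) := by
        rw [← hz, Finset.mul_sum]
        refine Finset.sum_congr rfl fun p hp => ?_
        rw [Finset.mem_filter] at hp
        have hppos : 0 < p := hpos p hp.1
        have hp0 : (p : ℝ) ≠ 0 := Nat.cast_ne_zero.mpr hppos.ne'
        rw [Nat.cast_div hp.2 hp0]
        field_simp
      rw [hsplit, Finset.sum_insert hqnotin] at hz2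
      have hrest : ∑ p ∈ N.filter (fun p => p ∣ q ∧ p < q), T N a p / p
          = ((∑ p ∈ N.filter (fun p => p ∣ q ∧ p < q), c0 N a p : ℤ) : ℝ) := by
        push_cast
        refine Finset.sum_congr rfl fun p hp => ?_
        rw [Finset.mem_filter] at hp
        have hppos : 0 < p := hpos p hp.1
        have hp0 : (p : ℝ) ≠ 0 := Nat.cast_ne_zero.mpr hppos.ne'
        rw [c0_spec N a p (ih p hp.2.2 hp.1)]
        field_simp
      refine ⟨z - ∑ p ∈ N.filter (fun p => p ∣ q ∧ p < q), c0 N a p, ?_⟩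
      have : T N a q / q = (z : ℝ) - ∑ p ∈ N.filter (fun p => p ∣ q ∧ p < q), T N a p / p := by
        linarith [hz2]
      rw [hrest] at this
      push_cast
      field_simp at this ⊢
      push_cast at this
      linarith [this]
  refine ⟨c0 N a, fun κ hκ => ?_⟩
  rw [a_eq_sum N h1 hlcm a ha hpos κ hκ]
  refine Finset.sum_congr rfl fun p hp => ?_
  rw [Finset.mem_filter] at hp
  exact c0_spec N a p (key p hp.1)
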